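/- If α or β is not odd (i.e., has some nonzero even-indexed coordinate), then C^{α,β,γ,δ}(d,r) = 0, where C^{α,β,γ,δ}(d,r) is the sum of r-real multiplicities over all marked floor diagrams of type (α,β,γ,δ). -/

import Mathlib

open scoped Classical

/-- `ℕ^∞`: finitely supported sequences of nonnegative integers. -/
abbrev Vec : Type := ℕ →₀ ℕ

/-- `|α| = Σᵢ (α)ᵢ`. -/
def vabs (a : Vec) : ℕ := a.sum fun _ v => v

/-- `Iα = Σᵢ i·(α)ᵢ`. -/
def vI (a : Vec) : ℕ := a.sum fun i v => i * v

/-- Partial sum `Σ_{j=1}^{k} (α)_j`. -/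
def psum (a : Vec) (k : ℕ) : ℕ := ∑ j ∈ Finset.Icc 1 k, a j

/-- `I^α = Πᵢ i^{(α)_i}` as a rational number. -/
def Iexp (a : Vec) : ℚ := ∏ i ∈ a.support, (i : ℚ) ^ a i

/-- A weighted oriented graph: a list of oriented edges with positive weights. -/
structure WGraph (V : Type) where
  edges : List (V × V)
  weight : Fin edges.length → ℕ
  weight_pos : ∀ i, 0 < weight i

namespace WGraph

variable {V V' : Type} [Fintype V] [Fintype V']

def tail (G : WGraph V) (i : Fin G.edges.length) : V := (G.edges.get i).1

def head (G : WGraph V) (i : Fin G.edges.length) : V := (G.edges.get i).2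

def Adj (G : WGraph V) (u v : V) : Prop :=
  ∃ i, (G.tail i = u ∧ G.head i = v) ∨ (G.tail i = v ∧ G.head i = u)

def Connected (G : WGraph V) : Prop := ∀ u v : V, Relation.ReflTransGen G.Adj u v

/-- A tree: connected with Euler characteristic `#V - #E = 1`. -/
def IsTree (G : WGraph V) : Prop := G.Connected ∧ Fintype.card V = G.edges.length + 1

/-- A source: all adjacent edges are outgoing. -/
def IsSource (G : WGraph V) (v : V) : Prop := ∀ i, G.head i ≠ v

/-- Divergence: sum of incoming weights minus sum of outgoing weights. -/
noncomputable def div (G : WGraph V) (v : V) : ℤ :=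
  (∑ i, if G.head i = v then (G.weight i : ℤ) else 0)
    - ∑ i, if G.tail i = v then (G.weight i : ℤ) else 0

/-- Floor diagram of genus 0 and degree `d`. -/
def IsFloorDiagram (G : WGraph V) (d : ℕ) : Prop :=
  G.IsTree ∧ (∀ v, ¬ G.IsSource v → G.div v = 1) ∧
  (∀ v, G.IsSource v → ∃! i, G.tail i = v) ∧
  (∑ v : V, if G.IsSource v then G.div v else 0) = -(d : ℤ)

/-- Edge adjacent to a source (`Edge^∞`). -/
def IsInfEdge (G : WGraph V) (i : Fin G.edges.length) : Prop :=
  G.IsSource (G.tail i) ∨ G.IsSource (G.head i)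

/-- Adjacency between elements (vertices or edges) of the graph. -/
def ElemAdj (G : WGraph V) : V ⊕ Fin G.edges.length → V ⊕ Fin G.edges.length → Prop
  | Sum.inl v, Sum.inr e => G.tail e = v ∨ G.head e = v
  | Sum.inr e, Sum.inl v => G.tail e = v ∨ G.head e = v
  | _, _ => False

/-- One step of the natural partial order on an oriented tree. -/
def Step (G : WGraph V) : V ⊕ Fin G.edges.length → V ⊕ Fin G.edges.length → Prop
  | Sum.inr e, Sum.inl v => G.head e = v
  | Sum.inl v, Sum.inr e => G.tail e = v
  | _, _ => False

/-- The natural (strict) partial order "greater than" on elements of an oriented tree. -/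
def ElemGT (G : WGraph V) : V ⊕ Fin G.edges.length → V ⊕ Fin G.edges.length → Prop :=
  Relation.TransGen G.Step

end WGraph

/-- `n = 2d - 1 + |α+β+2γ+2δ|` where `d = Iα+Iβ+2Iγ+2Iδ`. -/
noncomputable def mn (α β γ δ : Vec) : ℕ :=
  2 * (vI α + vI β + 2 * vI γ + 2 * vI δ) - 1 + vabs (α + β + 2 • γ + 2 • δ)

namespace WGraph

variable {V V' : Type} [Fintype V] [Fintype V']

/-- A marking of type `(α,β,γ,δ)` of a floor diagram, with marked points indexed by
`1,…,n`. -/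
structure IsMarking (G : WGraph V) (α β γ δ : Vec)
    (m : ℕ → V ⊕ Fin G.edges.length) : Prop where
  floor : G.IsFloorDiagram (vI α + vI β + 2 * vI γ + 2 * vI δ)
  inj : Set.InjOn m (Set.Icc 1 (mn α β γ δ))
  mono : ∀ i ∈ Set.Icc 1 (mn α β γ δ), ∀ j ∈ Set.Icc 1 (mn α β γ δ),
      G.ElemGT (m i) (m j) → j < i
  srcA : ∀ k, 1 ≤ k → ∀ i, psum α (k-1) + 1 ≤ i → i ≤ psum α k →
      ∃ v, m i = Sum.inl v ∧ G.IsSource v ∧ G.div v = -(k : ℤ)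
  srcG : ∀ k, 1 ≤ k → ∀ i, vabs α + 2 * psum γ (k-1) + 1 ≤ i →
      i ≤ vabs α + 2 * psum γ k →
      ∃ v, m i = Sum.inl v ∧ G.IsSource v ∧ G.div v = -(k : ℤ)
  edgeCount : ∀ k, 1 ≤ k →
      {e : Fin G.edges.length | G.IsInfEdge e ∧ G.weight e = k ∧
        ∃ i ∈ Set.Icc 1 (mn α β γ δ), m i = Sum.inr e}.ncard = β k + 2 * δ k
  srcEdge : ∀ v, G.IsSource v → ∀ e, (G.tail e = v ∨ G.head e = v) →
      Xor' (∃ i ∈ Set.Icc 1 (mn α β γ δ), m i = Sum.inl v)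
           (∃ i ∈ Set.Icc 1 (mn α β γ δ), m i = Sum.inr e)

/-- `{i, i+1}` is an `r`-pair. -/
def IsRPair (α γ : Vec) (n r i : ℕ) : Prop :=
  (∃ k, 1 ≤ k ∧ k ≤ vabs γ ∧ i = vabs α + 2 * k - 1) ∨
  (∃ k, 1 ≤ k ∧ k ≤ r ∧ i = n - 2 * k + 1)

/-- Membership in `Im(𝒟,m,r)`. -/
def InIm (G : WGraph V) (α γ : Vec) (r n : ℕ)
    (m : ℕ → V ⊕ Fin G.edges.length) (a : V ⊕ Fin G.edges.length) : Prop :=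
  ∃ i, IsRPair α γ n r i ∧ ¬ G.ElemAdj (m i) (m (i+1)) ∧ (a = m i ∨ a = m (i+1))

/-- The involution `ρ_{𝒟,m,r}`. -/
noncomputable def rho (G : WGraph V) (α γ : Vec) (r n : ℕ)
    (m : ℕ → V ⊕ Fin G.edges.length) (a : V ⊕ Fin G.edges.length) :
    V ⊕ Fin G.edges.length :=
  if h : InIm G α γ r n m a then
    (if a = m (Classical.choose h) then m (Classical.choose h + 1)
     else m (Classical.choose h))
  else a

/-- Equivalence of marked (weighted, oriented) graphs. -/
def MEquiv (G : WGraph V) (m : ℕ → V ⊕ Fin G.edges.length)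
    (G' : WGraph V') (m' : ℕ → V' ⊕ Fin G'.edges.length) (n : ℕ) : Prop :=
  ∃ (φ : V ≃ V') (σ : Fin G.edges.length ≃ Fin G'.edges.length),
    (∀ e, G'.tail (σ e) = φ (G.tail e)) ∧ (∀ e, G'.head (σ e) = φ (G.head e)) ∧
    (∀ e, G'.weight (σ e) = G.weight e) ∧
    ∀ i ∈ Set.Icc 1 n, m' i = Sum.map φ σ (m i)

/-- Isomorphism of weighted oriented graphs (forgetting markings). -/
def GEquiv (G : WGraph V) (G' : WGraph V') : Prop :=
  ∃ (φ : V ≃ V') (σ : Fin G.edges.length ≃ Fin G'.edges.length),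
    (∀ e, G'.tail (σ e) = φ (G.tail e)) ∧ (∀ e, G'.head (σ e) = φ (G.head e)) ∧
    (∀ e, G'.weight (σ e) = G.weight e)

/-- `(𝒟,m)` is `r`-real. -/
def IsRReal (G : WGraph V) (α β γ δ : Vec) (r : ℕ)
    (m : ℕ → V ⊕ Fin G.edges.length) : Prop :=
  MEquiv G m G (fun i => rho G α γ r (mn α β γ δ) m (m i)) (mn α β γ δ) ∧
  ∀ k, 1 ≤ k → {e : Fin G.edges.length | G.IsInfEdge e ∧ G.weight e = k ∧
      InIm G α γ r (mn α β γ δ) m (Sum.inr e)}.ncard = 2 * δ k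

/-- Complex multiplicity `μ^ℂ`. -/
noncomputable def muC (G : WGraph V) (α β γ δ : Vec) : ℚ :=
  (Iexp (2 • α + β + 4 • γ + 2 • δ))⁻¹ * ∏ e, (G.weight e : ℚ) ^ 2

/-- `r`-real multiplicity `μ^ℝ_r`. -/
noncomputable def muR (G : WGraph V) (α β γ δ : Vec) (r : ℕ)
    (m : ℕ → V ⊕ Fin G.edges.length) : ℚ :=
  if IsRReal G α β γ δ r m ∧
      (∀ e, 2 ∣ G.weight e → InIm G α γ r (mn α β γ δ) m (Sum.inr e)) then
    (-1 : ℚ) ^ (({v : V | ¬ G.IsSource v ∧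
        InIm G α γ r (mn α β γ δ) m (Sum.inl v)}.ncard) / 2)
      * (Iexp δ)⁻¹
      * ∏ e ∈ Finset.univ.filter
          (fun e => ¬ ∃ i ∈ Set.Icc 1 (mn α β γ δ - 2 * r), m i = Sum.inr e),
          (G.weight e : ℚ)
  else 0

end WGraph

/-- A bundled marked floor diagram of type `(α,β,γ,δ)`. -/
structure BMFD (α β γ δ : Vec) : Type 1 where
  V : Type
  [fV : Fintype V]
  G : WGraph V
  m : ℕ → V ⊕ Fin G.edges.length
  marking : G.IsMarking α β γ δ m

attribute [instance] BMFD.fV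

/-- Equivalence of bundled marked floor diagrams. -/
def BMFD.Equiv {α β γ δ : Vec} (X Y : BMFD α β γ δ) : Prop :=
  WGraph.MEquiv X.G X.m Y.G Y.m (mn α β γ δ)

noncomputable def BMFD.muC' {α β γ δ : Vec} (X : BMFD α β γ δ) : ℚ :=
  WGraph.muC X.G α β γ δ

noncomputable def BMFD.muR' {α β γ δ : Vec} (X : BMFD α β γ δ) (r : ℕ) : ℚ :=
  WGraph.muR X.G α β γ δ r X.m

lemma vabs_add (a b : Vec) : vabs (a + b) = vabs a + vabs b := by
  unfold vabs
  exact Finsupp.sum_add_index' (fun _ => rfl) (fun _ _ _ => rfl)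

lemma vabs_two_smul (a : Vec) : vabs (2 • a) = 2 * vabs a := by
  rw [two_smul, vabs_add]; omega

lemma psum_le_vabs (a : Vec) (k : ℕ) : psum a k ≤ vabs a := by
  unfold psum vabs Finsupp.sum
  exact Finset.sum_le_sum_of_ne_zero (fun x _ hx => Finsupp.mem_support_iff.2 hx)

lemma le_vI (a : Vec) (k : ℕ) (hk : a k ≠ 0) : k * a k ≤ vI a := by
  unfold vI Finsupp.sum
  exact Finset.single_le_sum (f := fun j => j * a j) (fun _ _ => Nat.zero_le _)
    (Finsupp.mem_support_iff.2 hk)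

lemma mn_eq (α β γ δ : Vec) : mn α β γ δ =
    2 * (vI α + vI β + 2 * vI γ + 2 * vI δ) - 1
      + (vabs α + vabs β + 2 * vabs γ + 2 * vabs δ) := by
  unfold mn
  rw [vabs_add, vabs_add, vabs_add, vabs_two_smul, vabs_two_smul]

/-- If `α` or `β` is not odd (has a nonzero even-indexed coordinate), then every marked
floor diagram of type `(α,β,γ,δ)` has vanishing `r`-real multiplicity; consequently
`C^{α,β,γ,δ}(d,r)`, the sum of `r`-real multiplicities over all marked floor diagrams
of type `(α,β,γ,δ)`, is zero. -/
theorem stmt11 {V : Type} [Fintype V] (G : WGraph V) (α β γ δ : Vec) (r : ℕ)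
    (m : ℕ → V ⊕ Fin G.edges.length) (hm : G.IsMarking α β γ δ m)
    (h : ∃ i, 1 ≤ i ∧ (α (2 * i) ≠ 0 ∨ β (2 * i) ≠ 0)) :
    G.muR α β γ δ r m = 0 := by
  unfold WGraph.muR
  rw [if_neg]
  rintro ⟨hreal, hIm⟩
  obtain ⟨i, hi1, hαβ⟩ := h
  rcases hαβ with hα | hβ
  · -- `α` has a nonzero even coordinate
    have hps : psum α (2*i) = psum α (2*i-1) + α (2*i) := by
      have h2i : 2*i = (2*i-1)+1 := by omega
      rw [psum, psum, h2i]
      rw [Finset.sum_Icc_succ_top (by omega)]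
      simp
    have hα1 : 1 ≤ α (2*i) := Nat.one_le_iff_ne_zero.2 hα
    obtain ⟨v, hmv, hsrc, hdiv⟩ := hm.srcA (2*i) (by omega) (psum α (2*i-1)+1)
      le_rfl (by omega)
    obtain ⟨e, hev, heu⟩ := hm.floor.2.2.1 v hsrc
    have hdive : G.div v = -(G.weight e : ℤ) := by
      unfold WGraph.div
      rw [Finset.sum_eq_zero (fun j _ => if_neg (hsrc j)),
        Finset.sum_eq_single e
          (fun b _ hb => if_neg (fun hbv => hb (heu b hbv)))
          (fun he => absurd (Finset.mem_univ e) he),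
        if_pos hev]
      ring
    have hwe : G.weight e = 2*i := by omega
    obtain ⟨j, hpair, -, hje⟩ := hIm e (by rw [hwe]; exact Dvd.intro i rfl)
    have hd2 : 2 ≤ vI α + vI β + 2 * vI γ + 2 * vI δ := by
      have h1 := le_vI α (2*i) hα
      have h2 : 2 ≤ 2*i*α (2*i) :=
        le_trans (by omega) (Nat.mul_le_mul_left (2*i) hα1)
      omega
    have hnval := mn_eq α β γ δ
    have hB : ∃ j ∈ Set.Icc 1 (mn α β γ δ), m j = Sum.inr e := by
      rcases hpair with ⟨k, hk1, hk2, hjv⟩ | ⟨k, hk1, hk2, hjv⟩ <;>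
        rcases hje with he | he <;>
        exact ⟨_, ⟨by omega, by omega⟩, he.symm⟩
    have hA : ∃ j ∈ Set.Icc 1 (mn α β γ δ), m j = Sum.inl v := by
      refine ⟨psum α (2*i-1)+1, ⟨by omega, ?_⟩, hmv⟩
      have := psum_le_vabs α (2*i)
      omega
    rcases hm.srcEdge v hsrc e (Or.inl hev) with ⟨-, hnB⟩ | ⟨-, hnA⟩
    · exact hnB hB
    · exact hnA hA
  · -- `β` has a nonzero even coordinate
    have h1 := hm.edgeCount (2*i) (by omega)
    have h2 := hreal.2 (2*i) (by omega)
    have hsub : {e : Fin G.edges.length | G.IsInfEdge e ∧ G.weight e = 2*i ∧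
          ∃ j ∈ Set.Icc 1 (mn α β γ δ), m j = Sum.inr e} ⊆
        {e : Fin G.edges.length | G.IsInfEdge e ∧ G.weight e = 2*i ∧
          WGraph.InIm G α γ r (mn α β γ δ) m (Sum.inr e)} := by
      rintro e ⟨he1, he2, -⟩
      exact ⟨he1, he2, hIm e (by rw [he2]; exact Dvd.intro i rfl)⟩
    have hle := Set.ncard_le_ncard hsub (Set.toFinite _)
    rw [h1, h2] at hle
    omega
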